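/- Let γ : ℝ → ℝ² be a smooth closed immersed plane curve parametrized by arc-length with period L > 0, and let x ∈ ℝ² be a point on the curve such that the set γ⁻¹(x) ∩ [0,L) is finite. Then 8·#(γ⁻¹(x) ∩ [0,L)) = ∫_γ (k² − k₀²)·|γ − x| ds, where k₀(s) = 2·| ⟨γ(s) − x, ν(s)⟩/|γ(s) − x|² + k(s)/2 | (defined for γ(s) ≠ x, with the integrand extended by its finite limiting values). -/

import Mathlib

open Real MeasureTheory
open scoped ENNReal

noncomputable section

/-- Euclidean dot product on `ℝ × ℝ`. -/
def dotp (v w : ℝ × ℝ) : ℝ := v.1 * w.1 + v.2 * w.2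

/-- Rotation of a vector by `π/2`. -/
def perp (v : ℝ × ℝ) : ℝ × ℝ := (-v.2, v.1)

/-- Unit normal of an arc-length parametrised curve: the unit tangent rotated by `π/2`. -/
def sNu (γ : ℝ → ℝ × ℝ) : ℝ → ℝ × ℝ := fun s => perp (deriv γ s)

/-- Curvature `k = ⟨γ_ss, ν⟩` of an arc-length parametrised plane curve. -/
def sCurv (γ : ℝ → ℝ × ℝ) : ℝ → ℝ := fun s => dotp (deriv (deriv γ) s) (sNu γ s)

open Set Filter Topology

/-! ### Auxiliary definitions -/

def intg (γ : ℝ → ℝ × ℝ) (x : ℝ × ℝ) : ℝ → ℝ := fun s =>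
  ((sCurv γ s)^2
      - (2 * |dotp (γ s - x) (sNu γ s) / dotp (γ s - x) (γ s - x)
            + sCurv γ s / 2|)^2)
    * Real.sqrt (dotp (γ s - x) (γ s - x))

def Ffun (γ : ℝ → ℝ × ℝ) (x : ℝ × ℝ) : ℝ → ℝ := fun s =>
  -4 * (dotp (γ s - x) (deriv γ s) / Real.sqrt (dotp (γ s - x) (γ s - x)))

/-! ### Generic helper lemmas -/

lemma hasDerivAt_fst' {f : ℝ → ℝ × ℝ} {f' : ℝ × ℝ} {s : ℝ} (h : HasDerivAt f f' s) :
    HasDerivAt (fun t => (f t).1) f'.1 s := by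
  simpa using (h.hasFDerivAt.fst).hasDerivAt

lemma hasDerivAt_snd' {f : ℝ → ℝ × ℝ} {f' : ℝ × ℝ} {s : ℝ} (h : HasDerivAt f f' s) :
    HasDerivAt (fun t => (f t).2) f'.2 s := by
  simpa using (h.hasFDerivAt.snd).hasDerivAt

lemma hasDerivAt_dotp {f g : ℝ → ℝ × ℝ} {f' g' : ℝ × ℝ} {s : ℝ}
    (hf : HasDerivAt f f' s) (hg : HasDerivAt g g' s) :
    HasDerivAt (fun t => dotp (f t) (g t)) (dotp f' (g s) + dotp (f s) g') s := by
  unfold dotp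
  convert ((hasDerivAt_fst' hf).mul (hasDerivAt_fst' hg)).add
    ((hasDerivAt_snd' hf).mul (hasDerivAt_snd' hg)) using 1 <;> first | rfl | ring

lemma tendsto_dotp {α : Type*} {l : Filter α} {f g : α → ℝ × ℝ} {a b : ℝ × ℝ}
    (hf : Tendsto f l (𝓝 a)) (hg : Tendsto g l (𝓝 b)) :
    Tendsto (fun s => dotp (f s) (g s)) l (𝓝 (dotp a b)) := by
  unfold dotp
  exact (((continuous_fst.tendsto a).comp hf).mul ((continuous_fst.tendsto b).comp hg)).add
    (((continuous_snd.tendsto a).comp hf).mul ((continuous_snd.tendsto b).comp hg))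

lemma continuous_dotp {f g : ℝ → ℝ × ℝ} (hf : Continuous f) (hg : Continuous g) :
    Continuous (fun s => dotp (f s) (g s)) := by
  unfold dotp
  exact ((continuous_fst.comp hf).mul (continuous_fst.comp hg)).add
    ((continuous_snd.comp hf).mul (continuous_snd.comp hg))

lemma dotp_self_pos {v : ℝ × ℝ} (hv : v ≠ 0) : 0 < dotp v v := by
  have h : v.1 ≠ 0 ∨ v.2 ≠ 0 := by
    by_contra h; push_neg at h
    exact hv (Prod.ext h.1 h.2)
  unfold dotp
  rcases h with h | h
  · nlinarith [mul_self_pos.mpr h, mul_self_nonneg v.2]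
  · nlinarith [mul_self_pos.mpr h, mul_self_nonneg v.1]

lemma dotp_smul_left (h : ℝ) (v w : ℝ × ℝ) : dotp (h • v) w = h * dotp v w := by
  unfold dotp
  simp [Prod.smul_fst, Prod.smul_snd, smul_eq_mul]
  ring

lemma dotp_comm (v w : ℝ × ℝ) : dotp v w = dotp w v := by unfold dotp; ring

lemma key_alg (p q c d e f r : ℝ) (hc : c*c+d*d = 1) (he : e*c+f*d = 0)
    (hrsq : r^2 = p*p+q*q) (hrpos : 0 < r) :
    ((e * -d + f*c)^2 - (2*|(p * -d + q*c)/(p*p+q*q) + (e * -d + f*c)/2|)^2) * r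
    = -4 * (((c*c+d*d + (p*e+q*f)) * r - (p*c+q*d) * (1/(2*r) * (c*p+d*q + (p*c+q*d)))) / r^2) := by
  have h2 : p*e+q*f = (p * -d + q*c)*(e * -d + f*c) := by
    linear_combination (p*c+q*d)*he - (p*e+q*f)*hc
  rw [mul_pow, sq_abs, hc, h2, ← hrsq]
  have hrne : r ≠ 0 := hrpos.ne'
  field_simp
  ring_nf
  linear_combination (-8*(p*p+q*q))*hc + 8*hrsq

lemma intervalIntegrable_of_tendsto {f : ℝ → ℝ} {A B la lb : ℝ} (hAB : A < B)
    (hf : ContinuousOn f (Set.Ioo A B)) (ha : Tendsto f (𝓝[>] A) (𝓝 la))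
    (hb : Tendsto f (𝓝[<] B) (𝓝 lb)) : IntervalIntegrable f volume A B := by
  set g := extendFrom (Set.Ioo A B) f with hgdef
  have hg : ContinuousOn g (Set.Icc A B) := continuousOn_Icc_extendFrom_Ioo hf ha hb
  have hgi : IntegrableOn g (Set.Ioo A B) volume :=
    (hg.integrableOn_Icc).mono_set Set.Ioo_subset_Icc_self
  have hfi : IntegrableOn f (Set.Ioo A B) volume :=
    hgi.congr_fun (fun s hs => (extendFrom_extends hf s hs)) measurableSet_Ioo
  have hfi' : IntegrableOn f (Set.Ioc A B) volume := by
    have hset : (Set.Ioo A B : Set ℝ) =ᵐ[volume] Set.Ioc A B := Ioo_ae_eq_Ioc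
    unfold IntegrableOn at hfi ⊢
    rwa [Measure.restrict_congr_set hset] at hfi
  exact (intervalIntegrable_iff_integrableOn_Ioc_of_le hAB.le).mpr hfi'

/-! ### Curve lemmas -/

section curve
variable {γ : ℝ → ℝ × ℝ} {x : ℝ × ℝ}

lemma hd1 (hsmooth : ContDiff ℝ (⊤ : ℕ∞) γ) : ∀ s, HasDerivAt γ (deriv γ s) s :=
  fun s => (hsmooth.differentiable (by simp) s).hasDerivAt

lemma hsm2 (hsmooth : ContDiff ℝ (⊤ : ℕ∞) γ) : ContDiff ℝ (⊤ : ℕ∞) (deriv γ) :=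
  (contDiff_infty_iff_deriv.mp hsmooth).2

lemma hd2 (hsmooth : ContDiff ℝ (⊤ : ℕ∞) γ) :
    ∀ s, HasDerivAt (deriv γ) (deriv (deriv γ) s) s :=
  fun s => ((hsm2 hsmooth).differentiable (by simp) s).hasDerivAt

lemma hc2 (hsmooth : ContDiff ℝ (⊤ : ℕ∞) γ) : Continuous (deriv (deriv γ)) :=
  (hsm2 (hsm2 hsmooth)).continuous

lemma horth (hsmooth : ContDiff ℝ (⊤ : ℕ∞) γ)
    (harc : ∀ s, dotp (deriv γ s) (deriv γ s) = 1) :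
    ∀ s, dotp (deriv (deriv γ) s) (deriv γ s) = 0 := by
  intro s
  have h1 : HasDerivAt (fun t => dotp (deriv γ t) (deriv γ t))
      (dotp (deriv (deriv γ) s) (deriv γ s) + dotp (deriv γ s) (deriv (deriv γ) s)) s :=
    hasDerivAt_dotp (hd2 hsmooth s) (hd2 hsmooth s)
  have h2 : (fun t => dotp (deriv γ t) (deriv γ t)) = fun _ => (1:ℝ) := funext harc
  rw [h2] at h1
  have h3 := h1.unique (hasDerivAt_const s 1)
  unfold dotp at h3 ⊢
  linarith

lemma hasDerivAt_Ffun (hsmooth : ContDiff ℝ (⊤ : ℕ∞) γ)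
    (harc : ∀ s, dotp (deriv γ s) (deriv γ s) = 1)
    {s : ℝ} (hs : γ s ≠ x) :
    HasDerivAt (Ffun γ x) (intg γ x s) s := by
  have hv : HasDerivAt (fun t => γ t - x) (deriv γ s) s := (hd1 hsmooth s).sub_const x
  have hr2pos : 0 < dotp (γ s - x) (γ s - x) := dotp_self_pos (sub_ne_zero.mpr hs)
  have hrpos : 0 < Real.sqrt (dotp (γ s - x) (γ s - x)) := Real.sqrt_pos.mpr hr2pos
  have hg : HasDerivAt (fun t => dotp (γ t - x) (deriv γ t))
      (dotp (deriv γ s) (deriv γ s) + dotp (γ s - x) (deriv (deriv γ) s)) s :=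
    hasDerivAt_dotp hv (hd2 hsmooth s)
  have hr2 : HasDerivAt (fun t => dotp (γ t - x) (γ t - x))
      (dotp (deriv γ s) (γ s - x) + dotp (γ s - x) (deriv γ s)) s :=
    hasDerivAt_dotp hv hv
  have hsq : HasDerivAt (fun t => Real.sqrt (dotp (γ t - x) (γ t - x)))
      ((1 / (2 * Real.sqrt (dotp (γ s - x) (γ s - x)))) *
        (dotp (deriv γ s) (γ s - x) + dotp (γ s - x) (deriv γ s))) s :=
    (Real.hasDerivAt_sqrt hr2pos.ne').comp s hr2
  have hF := (hg.div hsq hrpos.ne').const_mul (-4 : ℝ)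
  convert hF using 1
  all_goals try rfl
  have hc := harc s
  have he := horth hsmooth harc s
  have hrsq : (Real.sqrt (dotp (γ s - x) (γ s - x)))^2 = dotp (γ s - x) (γ s - x) :=
    Real.sq_sqrt hr2pos.le
  unfold dotp at hc he hrsq hrpos ⊢
  unfold intg sCurv sNu perp dotp
  exact key_alg _ _ _ _ _ _ _ hc he hrsq hrpos

end curve

section curve2
variable {γ : ℝ → ℝ × ℝ} {x : ℝ × ℝ}

lemma continuous_sNu (hsmooth : ContDiff ℝ (⊤ : ℕ∞) γ) : Continuous (sNu γ) := by
  unfold sNu perp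
  exact ((continuous_snd.comp (hsm2 hsmooth).continuous).neg).prodMk
    (continuous_fst.comp (hsm2 hsmooth).continuous)

lemma continuous_sCurv (hsmooth : ContDiff ℝ (⊤ : ℕ∞) γ) : Continuous (sCurv γ) :=
  continuous_dotp (hc2 hsmooth) (continuous_sNu hsmooth)

lemma continuous_R2 (hsmooth : ContDiff ℝ (⊤ : ℕ∞) γ) :
    Continuous (fun s => dotp (γ s - x) (γ s - x)) :=
  continuous_dotp (hsmooth.continuous.sub continuous_const)
    (hsmooth.continuous.sub continuous_const)

lemma continuousAt_intg (hsmooth : ContDiff ℝ (⊤ : ℕ∞) γ) {s0 : ℝ} (hs : γ s0 ≠ x) :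
    ContinuousAt (intg γ x) s0 := by
  have hvc : Continuous (fun s => γ s - x) := hsmooth.continuous.sub continuous_const
  have hR2 : Continuous (fun s => dotp (γ s - x) (γ s - x)) := continuous_R2 hsmooth
  have hne : dotp (γ s0 - x) (γ s0 - x) ≠ 0 := (dotp_self_pos (sub_ne_zero.mpr hs)).ne'
  have hφ : Continuous (fun s => dotp (γ s - x) (sNu γ s)) :=
    continuous_dotp hvc (continuous_sNu hsmooth)
  have hK : Continuous (sCurv γ) := continuous_sCurv hsmooth
  unfold intg
  exact (((hK.continuousAt.pow 2).sub
    ((((continuousAt_const.mul (((hφ.continuousAt.div hR2.continuousAt hne).add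
      (hK.continuousAt.div continuousAt_const two_ne_zero)).abs))).pow 2))).mul
    ((Real.continuous_sqrt.continuousAt).comp hR2.continuousAt))

lemma continuousAt_Ffun (hsmooth : ContDiff ℝ (⊤ : ℕ∞) γ) {s0 : ℝ} (hs : γ s0 ≠ x) :
    ContinuousAt (Ffun γ x) s0 := by
  have hvc : Continuous (fun s => γ s - x) := hsmooth.continuous.sub continuous_const
  have hR2 : Continuous (fun s => dotp (γ s - x) (γ s - x)) := continuous_R2 hsmooth
  have hne : Real.sqrt (dotp (γ s0 - x) (γ s0 - x)) ≠ 0 :=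
    (Real.sqrt_pos.mpr (dotp_self_pos (sub_ne_zero.mpr hs))).ne'
  have hg : Continuous (fun s => dotp (γ s - x) (deriv γ s)) :=
    continuous_dotp hvc (hsm2 hsmooth).continuous
  unfold Ffun
  exact continuousAt_const.mul (hg.continuousAt.div
    ((Real.continuous_sqrt.continuousAt).comp hR2.continuousAt) hne)

lemma smul_slope (t s : ℝ) (hst : s ≠ t) : (s - t) • slope γ t s = γ s - γ t := by
  rw [slope_def_module]
  rw [smul_inv_smul₀ (sub_ne_zero.mpr hst)]

lemma tendsto_slope_of_deriv (hsmooth : ContDiff ℝ (⊤ : ℕ∞) γ) (t : ℝ) :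
    Tendsto (slope γ t) (𝓝[≠] t) (𝓝 (deriv γ t)) :=
  hasDerivAt_iff_tendsto_slope.mp (hd1 hsmooth t)

lemma tendsto_Ffun_right (hsmooth : ContDiff ℝ (⊤ : ℕ∞) γ)
    (harc : ∀ s, dotp (deriv γ s) (deriv γ s) = 1)
    {t : ℝ} (ht : γ t = x) :
    Tendsto (Ffun γ x) (𝓝[>] t) (𝓝 (-4)) := by
  have hmono : 𝓝[>] t ≤ 𝓝[≠] t := nhdsWithin_mono t (fun y hy => ne_of_gt hy)
  have hu : Tendsto (slope γ t) (𝓝[>] t) (𝓝 (deriv γ t)) :=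
    (tendsto_slope_of_deriv hsmooth t).mono_left hmono
  have hγ' : Tendsto (deriv γ) (𝓝[>] t) (𝓝 (deriv γ t)) :=
    ((hsm2 hsmooth).continuous.tendsto _).mono_left nhdsWithin_le_nhds
  have hnum : Tendsto (fun s => dotp (slope γ t s) (deriv γ s)) (𝓝[>] t) (𝓝 1) := by
    have := tendsto_dotp hu hγ'
    rwa [harc t] at this
  have hden : Tendsto (fun s => Real.sqrt (dotp (slope γ t s) (slope γ t s))) (𝓝[>] t)
      (𝓝 1) := by
    have h1 := (Real.continuous_sqrt.tendsto _).comp (tendsto_dotp hu hu)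
    rwa [harc t, Real.sqrt_one] at h1
  have hlim : Tendsto (fun s => -4 * (dotp (slope γ t s) (deriv γ s) /
      Real.sqrt (dotp (slope γ t s) (slope γ t s)))) (𝓝[>] t) (𝓝 (-4)) := by
    have := (hnum.div hden one_ne_zero).const_mul (-4 : ℝ)
    simpa using this
  refine hlim.congr' ?_
  filter_upwards [self_mem_nhdsWithin] with s hs
  have hst : s ≠ t := ne_of_gt hs
  have hpos : (0:ℝ) < s - t := sub_pos.mpr hs
  have hvs : γ s - x = (s - t) • slope γ t s := by rw [smul_slope t s hst, ht]
  unfold Ffun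
  rw [hvs, dotp_smul_left, dotp_comm ((s-t) • slope γ t s), dotp_smul_left,
    dotp_comm (slope γ t s) ((s-t) • slope γ t s), dotp_smul_left]
  rw [show (s-t) * ((s-t) * dotp (slope γ t s) (slope γ t s))
      = (s-t)^2 * dotp (slope γ t s) (slope γ t s) from by ring]
  rw [Real.sqrt_mul (sq_nonneg _), Real.sqrt_sq_eq_abs, abs_of_pos hpos]
  rw [mul_div_mul_left _ _ hpos.ne']

lemma tendsto_Ffun_left (hsmooth : ContDiff ℝ (⊤ : ℕ∞) γ)
    (harc : ∀ s, dotp (deriv γ s) (deriv γ s) = 1)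
    {t : ℝ} (ht : γ t = x) :
    Tendsto (Ffun γ x) (𝓝[<] t) (𝓝 4) := by
  have hmono : 𝓝[<] t ≤ 𝓝[≠] t := nhdsWithin_mono t (fun y hy => ne_of_lt hy)
  have hu : Tendsto (slope γ t) (𝓝[<] t) (𝓝 (deriv γ t)) :=
    (tendsto_slope_of_deriv hsmooth t).mono_left hmono
  have hγ' : Tendsto (deriv γ) (𝓝[<] t) (𝓝 (deriv γ t)) :=
    ((hsm2 hsmooth).continuous.tendsto _).mono_left nhdsWithin_le_nhds
  have hnum : Tendsto (fun s => dotp (slope γ t s) (deriv γ s)) (𝓝[<] t) (𝓝 1) := by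
    have := tendsto_dotp hu hγ'
    rwa [harc t] at this
  have hden : Tendsto (fun s => Real.sqrt (dotp (slope γ t s) (slope γ t s))) (𝓝[<] t)
      (𝓝 1) := by
    have h1 := (Real.continuous_sqrt.tendsto _).comp (tendsto_dotp hu hu)
    rwa [harc t, Real.sqrt_one] at h1
  have hlim : Tendsto (fun s => (4:ℝ) * (dotp (slope γ t s) (deriv γ s) /
      Real.sqrt (dotp (slope γ t s) (slope γ t s)))) (𝓝[<] t) (𝓝 4) := by
    have := (hnum.div hden one_ne_zero).const_mul (4 : ℝ)
    simpa using this
  refine hlim.congr' ?_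
  filter_upwards [self_mem_nhdsWithin] with s hs
  have hst : s ≠ t := ne_of_lt hs
  have hneg : s - t < 0 := sub_neg.mpr hs
  have hvs : γ s - x = (s - t) • slope γ t s := by rw [smul_slope t s hst, ht]
  unfold Ffun
  rw [hvs, dotp_smul_left, dotp_comm ((s-t) • slope γ t s), dotp_smul_left,
    dotp_comm (slope γ t s) ((s-t) • slope γ t s), dotp_smul_left]
  rw [show (s-t) * ((s-t) * dotp (slope γ t s) (slope γ t s))
      = (s-t)^2 * dotp (slope γ t s) (slope γ t s) from by ring]
  rw [Real.sqrt_mul (sq_nonneg _), Real.sqrt_sq_eq_abs, abs_of_neg hneg]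
  rw [show -(s-t) * Real.sqrt (dotp (slope γ t s) (slope γ t s))
      = (s-t) * (-Real.sqrt (dotp (slope γ t s) (slope γ t s))) from by ring]
  rw [mul_div_mul_left _ _ (sub_ne_zero.mpr hst), div_neg]
  ring

end curve2

section curve3
variable {γ : ℝ → ℝ × ℝ} {x : ℝ × ℝ}

lemma dotp_smul_right (h : ℝ) (v w : ℝ × ℝ) : dotp v (h • w) = h * dotp v w := by
  rw [dotp_comm, dotp_smul_left, dotp_comm]

lemma tendsto_intg (hsmooth : ContDiff ℝ (⊤ : ℕ∞) γ)
    (harc : ∀ s, dotp (deriv γ s) (deriv γ s) = 1)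
    {t : ℝ} (ht : γ t = x) :
    Tendsto (intg γ x) (𝓝[≠] t) (𝓝 0) := by
  have hvc : Continuous (fun s => γ s - x) := hsmooth.continuous.sub continuous_const
  have hR2c : Continuous (fun s => dotp (γ s - x) (γ s - x)) := continuous_R2 hsmooth
  have hφc : Continuous (fun s => dotp (γ s - x) (sNu γ s)) :=
    continuous_dotp hvc (continuous_sNu hsmooth)
  have hKc : Continuous (sCurv γ) := continuous_sCurv hsmooth
  have hν : ∀ s, HasDerivAt (sNu γ) (perp (deriv (deriv γ) s)) s := by
    intro s
    unfold sNu perp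
    exact ((hasDerivAt_snd' (hd2 hsmooth s)).neg).prodMk (hasDerivAt_fst' (hd2 hsmooth s))
  have hvd : ∀ s, HasDerivAt (fun u => γ u - x) (deriv γ s) s :=
    fun s => (hd1 hsmooth s).sub_const x
  have hφd : ∀ s : ℝ, HasDerivAt (fun u => dotp (γ u - x) (sNu γ u))
      (dotp (deriv γ s) (sNu γ s) + dotp (γ s - x) (perp (deriv (deriv γ) s))) s :=
    fun s => hasDerivAt_dotp (hvd s) (hν s)
  have hR2d : ∀ s : ℝ, HasDerivAt (fun u => dotp (γ u - x) (γ u - x))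
      (dotp (deriv γ s) (γ s - x) + dotp (γ s - x) (deriv γ s)) s :=
    fun s => hasDerivAt_dotp (hvd s) (hvd s)
  -- slope facts on punctured nbhd
  have hu : Tendsto (slope γ t) (𝓝[≠] t) (𝓝 (deriv γ t)) := tendsto_slope_of_deriv hsmooth t
  have hγ' : Tendsto (deriv γ) (𝓝[≠] t) (𝓝 (deriv γ t)) :=
    ((hsm2 hsmooth).continuous.tendsto _).mono_left nhdsWithin_le_nhds
  have hnum1 : Tendsto (fun s => dotp (slope γ t s) (deriv γ s)) (𝓝[≠] t) (𝓝 1) := by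
    have := tendsto_dotp hu hγ'
    rwa [harc t] at this
  have hposev : ∀ᶠ s in 𝓝[≠] t, 0 < dotp (slope γ t s) (deriv γ s) :=
    hnum1.eventually (eventually_gt_nhds zero_lt_one)
  have hneev : ∀ᶠ s in 𝓝[≠] t, s ≠ t := by
    filter_upwards [self_mem_nhdsWithin] with s hs using hs
  have hvs : ∀ s : ℝ, s ≠ t → γ s - x = (s - t) • slope γ t s :=
    fun s hs => by rw [smul_slope t s hs, ht]
  -- L'Hopital
  have hdiv : Tendsto (fun s => (dotp (deriv γ s) (sNu γ s)
        + dotp (γ s - x) (perp (deriv (deriv γ) s)))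
      / (dotp (deriv γ s) (γ s - x) + dotp (γ s - x) (deriv γ s))) (𝓝[≠] t)
      (𝓝 (-(sCurv γ t)/2)) := by
    have hperpc : Continuous (fun s => perp (deriv (deriv γ) s)) := by
      unfold perp
      exact ((continuous_snd.comp (hc2 hsmooth)).neg).prodMk
        (continuous_fst.comp (hc2 hsmooth))
    have hnum2 : Tendsto (fun s => dotp (slope γ t s) (perp (deriv (deriv γ) s))) (𝓝[≠] t)
        (𝓝 (dotp (deriv γ t) (perp (deriv (deriv γ) t)))) :=
      tendsto_dotp hu ((hperpc.tendsto _).mono_left nhdsWithin_le_nhds)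
    have hlim : Tendsto (fun s => dotp (slope γ t s) (perp (deriv (deriv γ) s))
        / (2 * dotp (slope γ t s) (deriv γ s))) (𝓝[≠] t)
        (𝓝 (dotp (deriv γ t) (perp (deriv (deriv γ) t)) / (2 * 1))) :=
      hnum2.div (hnum1.const_mul 2) (by norm_num)
    have hval : dotp (deriv γ t) (perp (deriv (deriv γ) t)) / (2 * 1) = -(sCurv γ t)/2 := by
      unfold sCurv sNu perp dotp
      ring
    rw [hval] at hlim
    refine hlim.congr' ?_
    filter_upwards [self_mem_nhdsWithin] with s hs
    have hst : s ≠ t := hs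
    have h0 : dotp (deriv γ s) (sNu γ s) = 0 := by unfold sNu perp dotp; ring
    refine Eq.symm ?_
    rw [h0, zero_add, hvs s hst, dotp_smul_left, dotp_smul_right, dotp_smul_left,
      show dotp (deriv γ s) (slope γ t s) = dotp (slope γ t s) (deriv γ s) from dotp_comm _ _,
      show (s-t) * dotp (slope γ t s) (deriv γ s) + (s-t) * dotp (slope γ t s) (deriv γ s)
        = (s-t) * (2 * dotp (slope γ t s) (deriv γ s)) from by ring,
      mul_div_mul_left _ _ (sub_ne_zero.mpr hst)]
  have hg'ne : ∀ᶠ s in 𝓝[≠] t, dotp (deriv γ s) (γ s - x) + dotp (γ s - x) (deriv γ s) ≠ 0 := by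
    filter_upwards [hposev, hneev] with s hpos hst
    rw [hvs s hst, dotp_smul_right, dotp_smul_left,
      show dotp (deriv γ s) (slope γ t s) = dotp (slope γ t s) (deriv γ s) from dotp_comm _ _,
      show (s-t) * dotp (slope γ t s) (deriv γ s) + (s-t) * dotp (slope γ t s) (deriv γ s)
        = (s-t) * (2 * dotp (slope γ t s) (deriv γ s)) from by ring]
    exact mul_ne_zero (sub_ne_zero.mpr hst) (by positivity)
  have hφ0 : Tendsto (fun s => dotp (γ s - x) (sNu γ s)) (𝓝[≠] t) (𝓝 0) := by
    have h1 := (hφc.tendsto t).mono_left (nhdsWithin_le_nhds : 𝓝[≠] t ≤ 𝓝 t)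
    have h2 : dotp (γ t - x) (sNu γ t) = 0 := by
      rw [ht]; unfold dotp; simp
    rwa [h2] at h1
  have hR20 : Tendsto (fun s => dotp (γ s - x) (γ s - x)) (𝓝[≠] t) (𝓝 0) := by
    have h1 := (hR2c.tendsto t).mono_left (nhdsWithin_le_nhds : 𝓝[≠] t ≤ 𝓝 t)
    have h2 : dotp (γ t - x) (γ t - x) = 0 := by rw [ht]; unfold dotp; simp
    rwa [h2] at h1
  have hQ : Tendsto (fun s => dotp (γ s - x) (sNu γ s) / dotp (γ s - x) (γ s - x)) (𝓝[≠] t)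
      (𝓝 (-(sCurv γ t)/2)) :=
    HasDerivAt.lhopital_zero_nhdsNE (Eventually.of_forall hφd) (Eventually.of_forall hR2d)
      hg'ne hφ0 hR20 hdiv
  -- assemble
  have hK : Tendsto (sCurv γ) (𝓝[≠] t) (𝓝 (sCurv γ t)) :=
    (hKc.tendsto t).mono_left nhdsWithin_le_nhds
  have hQ2 : Tendsto (fun s => dotp (γ s - x) (sNu γ s) / dotp (γ s - x) (γ s - x)
      + sCurv γ s / 2) (𝓝[≠] t) (𝓝 0) := by
    have h := hQ.add (hK.div_const 2)
    rwa [show -sCurv γ t / 2 + sCurv γ t / 2 = (0:ℝ) from by ring] at h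
  have hsq0 : Tendsto (fun s => Real.sqrt (dotp (γ s - x) (γ s - x))) (𝓝[≠] t) (𝓝 0) := by
    have := (Real.continuous_sqrt.tendsto 0).comp hR20
    simpa [Function.comp_def] using this
  have hfin : Tendsto (fun s => ((sCurv γ s)^2 - (2 * |dotp (γ s - x) (sNu γ s)
      / dotp (γ s - x) (γ s - x) + sCurv γ s / 2|)^2)
      * Real.sqrt (dotp (γ s - x) (γ s - x))) (𝓝[≠] t)
      (𝓝 (((sCurv γ t)^2 - (2 * |(0:ℝ)|)^2) * 0)) :=
    ((hK.pow 2).sub ((hQ2.abs.const_mul 2).pow 2)).mul hsq0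
  have : (((sCurv γ t)^2 - (2 * |(0:ℝ)|)^2) * 0) = 0 := by simp
  rw [this] at hfin
  exact hfin

end curve3

section curve4
variable {γ : ℝ → ℝ × ℝ} {x : ℝ × ℝ}

lemma piece (hsmooth : ContDiff ℝ (⊤ : ℕ∞) γ)
    (harc : ∀ s, dotp (deriv γ s) (deriv γ s) = 1)
    {A B : ℝ} (hAB : A < B) (hgap : ∀ s ∈ Set.Ioo A B, γ s ≠ x) :
    IntervalIntegrable (intg γ x) volume A B ∧
    ∫ s in A..B, intg γ x s
      = (if γ B = x then (4:ℝ) else Ffun γ x B) - (if γ A = x then (-4:ℝ) else Ffun γ x A) := by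
  have hmonoA : 𝓝[>] A ≤ 𝓝[≠] A := nhdsWithin_mono A (fun y hy => ne_of_gt hy)
  have hmonoB : 𝓝[<] B ≤ 𝓝[≠] B := nhdsWithin_mono B (fun y hy => ne_of_lt hy)
  have hderiv : ∀ s ∈ Set.Ioo A B, HasDerivAt (Ffun γ x) (intg γ x s) s :=
    fun s hs => hasDerivAt_Ffun hsmooth harc (hgap s hs)
  have hcont : ContinuousOn (intg γ x) (Set.Ioo A B) :=
    fun s hs => (continuousAt_intg hsmooth (hgap s hs)).continuousWithinAt
  have hiA : ∃ l, Tendsto (intg γ x) (𝓝[>] A) (𝓝 l) := by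
    by_cases hA : γ A = x
    · exact ⟨0, (tendsto_intg hsmooth harc hA).mono_left hmonoA⟩
    · exact ⟨intg γ x A, (continuousAt_intg hsmooth hA).tendsto.mono_left nhdsWithin_le_nhds⟩
  have hiB : ∃ l, Tendsto (intg γ x) (𝓝[<] B) (𝓝 l) := by
    by_cases hB : γ B = x
    · exact ⟨0, (tendsto_intg hsmooth harc hB).mono_left hmonoB⟩
    · exact ⟨intg γ x B, (continuousAt_intg hsmooth hB).tendsto.mono_left nhdsWithin_le_nhds⟩
  obtain ⟨lA, hlA⟩ := hiA
  obtain ⟨lB, hlB⟩ := hiB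
  have hint : IntervalIntegrable (intg γ x) volume A B :=
    intervalIntegrable_of_tendsto hAB hcont hlA hlB
  refine ⟨hint, ?_⟩
  have hFA : Tendsto (Ffun γ x) (𝓝[>] A) (𝓝 (if γ A = x then (-4:ℝ) else Ffun γ x A)) := by
    by_cases hA : γ A = x
    · rw [if_pos hA]; exact tendsto_Ffun_right hsmooth harc hA
    · rw [if_neg hA]
      exact (continuousAt_Ffun hsmooth hA).tendsto.mono_left nhdsWithin_le_nhds
  have hFB : Tendsto (Ffun γ x) (𝓝[<] B) (𝓝 (if γ B = x then (4:ℝ) else Ffun γ x B)) := by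
    by_cases hB : γ B = x
    · rw [if_pos hB]; exact tendsto_Ffun_left hsmooth harc hB
    · rw [if_neg hB]
      exact (continuousAt_Ffun hsmooth hB).tendsto.mono_left nhdsWithin_le_nhds
  exact intervalIntegral.integral_eq_sub_of_hasDerivAt_of_tendsto hAB hderiv hint hFA hFB

lemma deriv_periodic (hsmooth : ContDiff ℝ (⊤ : ℕ∞) γ) {L : ℝ} (hper : ∀ s, γ (s + L) = γ s) :
    ∀ s, deriv γ (s + L) = deriv γ s := by
  intro s
  have h1 : HasDerivAt (fun u => γ (u + L)) (deriv γ (s + L)) s := by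
    have := HasDerivAt.scomp (𝕜 := ℝ) s (hd1 hsmooth (s + L)) ((hasDerivAt_id s).add_const L)
    simpa [Function.comp_def] using this
  have h2 : (fun u => γ (u + L)) = γ := funext hper
  rw [h2] at h1
  exact h1.unique (hd1 hsmooth s)

end curve4

/-- **Counting multiplicity by integration** (Lemma 5.1): for a smooth closed
immersed arc-length parametrised plane curve of length `L` and a point `x` on
the curve with finitely many preimages in one period,
`8 #γ⁻¹(x) = ∫_γ (k² - k₀²)|γ - x| ds`, where
`k₀ = 2|⟨γ - x, ν⟩/|γ - x|² + k/2|`.  (The finitely many points where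
`γ s = x` form a set of measure zero, so the value of the integrand there is
irrelevant to the integral; this realises the extension of the integrand by
its finite limiting values.) -/
theorem stmt_19
    (γ : ℝ → ℝ × ℝ) (L : ℝ) (hL : 0 < L)
    (hsmooth : ContDiff ℝ (⊤ : ℕ∞) γ)
    (hper : ∀ s, γ (s + L) = γ s)
    (harc : ∀ s, dotp (deriv γ s) (deriv γ s) = 1)
    (x : ℝ × ℝ) (hx : ∃ s, γ s = x)
    (hfin : ({s ∈ Set.Ico 0 L | γ s = x}).Finite) :
    (8 : ℝ) * ({s ∈ Set.Ico 0 L | γ s = x}).ncard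
      = ∫ s in (0:ℝ)..L,
          ((sCurv γ s)^2
              - (2 * |dotp (γ s - x) (sNu γ s) / dotp (γ s - x) (γ s - x)
                    + sCurv γ s / 2|)^2)
            * Real.sqrt (dotp (γ s - x) (γ s - x)) := by
  classical
  show (8 : ℝ) * ({s ∈ Set.Ico 0 L | γ s = x}).ncard = ∫ s in (0:ℝ)..L, intg γ x s
  have hγL0 : γ L = γ 0 := by have := hper 0; rwa [zero_add] at this
  have hdL0 : deriv γ L = deriv γ 0 := by
    have := deriv_periodic hsmooth hper 0; rwa [zero_add] at this
  set Sf : Finset ℝ := hfin.toFinset with hSfdef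
  have hmemSf : ∀ p, p ∈ Sf ↔ (0 ≤ p ∧ p < L) ∧ γ p = x := by
    intro p
    rw [hSfdef, Set.Finite.mem_toFinset]
    simp [Set.mem_Ico]
  set P : Finset ℝ := Sf ∪ {0, L} with hPdef
  have h0P : (0:ℝ) ∈ P := by simp [hPdef]
  have hLP : L ∈ P := by simp [hPdef]
  have hPIcc : ∀ p ∈ P, 0 ≤ p ∧ p ≤ L := by
    intro p hp
    rw [hPdef, Finset.mem_union] at hp
    rcases hp with hp | hp
    · rw [hmemSf] at hp; exact ⟨hp.1.1, hp.1.2.le⟩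
    · simp only [Finset.mem_insert, Finset.mem_singleton] at hp
      rcases hp with h | h
      · rw [h]; exact ⟨le_rfl, hL.le⟩
      · rw [h]; exact ⟨hL.le, le_rfl⟩
  have hPx : ∀ p ∈ P, p ≠ 0 → p ≠ L → γ p = x := by
    intro p hp hp0 hpL
    rw [hPdef, Finset.mem_union] at hp
    rcases hp with hp | hp
    · exact ((hmemSf p).mp hp).2
    · simp only [Finset.mem_insert, Finset.mem_singleton] at hp; tauto
  have hSfP : ∀ s, 0 ≤ s → s < L → γ s = x → s ∈ P := by
    intro s h0 h1 h2
    rw [hPdef, Finset.mem_union]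
    exact Or.inl ((hmemSf s).mpr ⟨⟨h0, h1⟩, h2⟩)
  have hsub : ({0, L} : Finset ℝ) ⊆ P := by
    intro p hp; rw [hPdef, Finset.mem_union]; exact Or.inr hp
  have hcard2 : 2 ≤ P.card := by
    have h2 : ({0, L} : Finset ℝ).card = 2 := by
      rw [Finset.card_insert_of_notMem (by simpa using hL.ne), Finset.card_singleton]
    rw [← h2]
    exact Finset.card_le_card hsub
  obtain ⟨m, hm⟩ : ∃ m, P.card = m + 1 := ⟨P.card - 1, by omega⟩
  have hm1 : 1 ≤ m := by omega
  set e := P.orderIsoOfFin hm with hedef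
  set a : ℕ → ℝ := fun i => (e ⟨min i m, by omega⟩ : ℝ) with hadef
  have haP : ∀ i, a i ∈ P := fun i => (e ⟨min i m, by omega⟩).2
  have hamono : ∀ i j : ℕ, i < j → j ≤ m → a i < a j := by
    intro i j hij hj
    have : (⟨min i m, by omega⟩ : Fin (m+1)) < ⟨min j m, by omega⟩ := by
      rw [Fin.mk_lt_mk]; omega
    exact e.strictMono this
  have hale : ∀ i j : ℕ, i ≤ j → a i ≤ a j := by
    intro i j hij
    have : (⟨min i m, by omega⟩ : Fin (m+1)) ≤ ⟨min j m, by omega⟩ := by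
      rw [Fin.mk_le_mk]; omega
    exact e.monotone this
  have hsurj : ∀ p ∈ P, ∃ j : ℕ, j ≤ m ∧ a j = p := by
    intro p hp
    refine ⟨(e.symm ⟨p, hp⟩ : Fin (m+1)).1, by omega, ?_⟩
    rw [hadef]
    have h1 : min ((e.symm ⟨p, hp⟩ : Fin (m+1)).1) m = (e.symm ⟨p, hp⟩ : Fin (m+1)).1 := by
      have := (e.symm ⟨p, hp⟩).2; omega
    simp only [h1]
    have : e ⟨(e.symm ⟨p, hp⟩ : Fin (m+1)).1, by omega⟩ = ⟨p, hp⟩ := by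
      rw [show (⟨(e.symm ⟨p, hp⟩ : Fin (m+1)).1, by omega⟩ : Fin (m+1)) = e.symm ⟨p, hp⟩
        from Fin.ext rfl]
      exact e.apply_symm_apply _
    rw [this]
  have ha0 : a 0 = 0 := by
    obtain ⟨j, hj, hja⟩ := hsurj 0 h0P
    have h1 : a 0 ≤ a j := hale 0 j (Nat.zero_le j)
    rw [hja] at h1
    exact le_antisymm h1 (hPIcc _ (haP 0)).1
  have ham : a m = L := by
    obtain ⟨j, hj, hja⟩ := hsurj L hLP
    have h1 : a j ≤ a m := hale j m hj
    rw [hja] at h1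
    exact le_antisymm (hPIcc _ (haP m)).2 h1
  have hintpt : ∀ i, 0 < i → i < m → γ (a i) = x := by
    intro i h0 h1
    have hne0 : a i ≠ 0 := by rw [← ha0]; exact (hamono 0 i h0 h1.le).ne'
    have hneL : a i ≠ L := by rw [← ham]; exact (hamono i m h1 le_rfl).ne
    exact hPx _ (haP i) hne0 hneL
  have hgap : ∀ i, i < m → ∀ s ∈ Set.Ioo (a i) (a (i+1)), γ s ≠ x := by
    intro i hi s hs hsx
    have hs0 : 0 ≤ s := le_trans (hPIcc _ (haP i)).1 hs.1.le
    have hsL : s < L := lt_of_lt_of_le hs.2 (hPIcc _ (haP (i+1))).2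
    obtain ⟨j, hj, hja⟩ := hsurj s (hSfP s hs0 hsL hsx)
    have h1 : i < j := by
      by_contra h
      push_neg at h
      have := hale j i h
      rw [hja] at this
      exact absurd hs.1 (not_lt.mpr this)
    have h2 : j < i + 1 := by
      by_contra h
      push_neg at h
      have : a (i+1) ≤ a j := hale (i+1) j h
      rw [hja] at this
      exact absurd hs.2 (not_lt.mpr this)
    omega
  -- the pieces
  have hpiece : ∀ i, i < m →
      IntervalIntegrable (intg γ x) volume (a i) (a (i+1)) ∧
      ∫ s in a i..a (i+1), intg γ x s
        = (if γ (a (i+1)) = x then (4:ℝ) else Ffun γ x (a (i+1)))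
          - (if γ (a i) = x then (-4:ℝ) else Ffun γ x (a i)) :=
    fun i hi => piece hsmooth harc (hamono i (i+1) (Nat.lt_succ_self i) hi) (hgap i hi)
  have hsum := intervalIntegral.sum_integral_adjacent_intervals
    (μ := volume) (f := intg γ x) (a := a) (n := m) (fun i hi => (hpiece i hi).1)
  rw [ha0, ham] at hsum
  rw [← hsum]
  set la : ℝ → ℝ := fun p => if γ p = x then (-4:ℝ) else Ffun γ x p with hladef
  set lb : ℝ → ℝ := fun p => if γ p = x then (4:ℝ) else Ffun γ x p with hlbdef
  have hsum2 : ∑ i ∈ Finset.range m, ∫ s in a i..a (i+1), intg γ x s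
      = ∑ i ∈ Finset.range m, ((lb (a (i+1)) - la (a (i+1))) + (la (a (i+1)) - la (a i))) := by
    refine Finset.sum_congr rfl ?_
    intro i hi
    rw [(hpiece i (Finset.mem_range.mp hi)).2]
    ring
  rw [hsum2, Finset.sum_add_distrib]
  have htel : ∑ i ∈ Finset.range m, (la (a (i+1)) - la (a i)) = la (a m) - la (a 0) :=
    Finset.sum_range_sub (fun i => la (a i)) m
  rw [htel, ha0, ham]
  have hcval : ∀ p, lb p - la p = if γ p = x then (8:ℝ) else 0 := by
    intro p
    by_cases h : γ p = x <;> simp [hladef, hlbdef, h] <;> ring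
  -- count
  have hncard : ({s ∈ Set.Ico 0 L | γ s = x}).ncard = Sf.card := by
    rw [Set.ncard_eq_toFinset_card _ hfin]
  by_cases h0 : γ 0 = x
  · -- 0 is a preimage
    have hLx : γ L = x := by rw [hγL0]; exact h0
    have hall : ∀ i ∈ Finset.range m, lb (a (i+1)) - la (a (i+1)) = 8 := by
      intro i hi
      rw [hcval]
      have him := Finset.mem_range.mp hi
      rcases Nat.lt_or_ge (i+1) m with h | h
      · rw [if_pos (hintpt (i+1) (Nat.succ_pos i) h)]
      · have : i + 1 = m := by omega
        rw [this, ham, if_pos hLx]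
    rw [Finset.sum_congr rfl hall, Finset.sum_const, Finset.card_range]
    have hboundary : la L - la 0 = 0 := by
      simp [hladef, h0, hLx]
    rw [hboundary]
    -- card: P = insert L Sf
    have h0Sf : (0:ℝ) ∈ Sf := (hmemSf 0).mpr ⟨⟨le_refl 0, hL⟩, h0⟩
    have hLSf : L ∉ Sf := by
      intro h; exact absurd ((hmemSf L).mp h).1.2 (lt_irrefl L)
    have hPeq : P = insert L Sf := by
      rw [hPdef]
      ext p
      simp only [Finset.mem_union, Finset.mem_insert, Finset.mem_singleton]
      constructor
      · rintro (h | h | h)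
        · exact Or.inr h
        · subst h; exact Or.inr h0Sf
        · exact Or.inl h
      · rintro (h | h)
        · exact Or.inr (Or.inr h)
        · exact Or.inl h
    have hcard : Sf.card = m := by
      have := Finset.card_insert_of_notMem hLSf
      rw [← hPeq, hm] at this
      omega
    rw [hncard, hcard]
    push_cast
    ring
  · -- 0 is not a preimage
    have hLx : γ L ≠ x := by rw [hγL0]; exact h0
    have hboundary : la L - la 0 = 0 := by
      simp only [hladef, if_neg h0, if_neg hLx]
      unfold Ffun
      rw [hγL0, hdL0]
      ring
    rw [hboundary]
    have hmsplit : m = (m - 1) + 1 := by omega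
    rw [hmsplit, Finset.sum_range_succ]
    have hlast : lb (a ((m-1)+1)) - la (a ((m-1)+1)) = 0 := by
      rw [hcval, show (m-1)+1 = m from by omega, ham, if_neg hLx]
    rw [hlast]
    have hall : ∀ i ∈ Finset.range (m-1), lb (a (i+1)) - la (a (i+1)) = 8 := by
      intro i hi
      have him : i + 1 < m := by
        have := Finset.mem_range.mp hi; omega
      rw [hcval, if_pos (hintpt (i+1) (Nat.succ_pos i) him)]
    rw [Finset.sum_congr rfl hall, Finset.sum_const, Finset.card_range]
    -- card: P = insert 0 (insert L Sf)
    have h0Sf : (0:ℝ) ∉ Sf := by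
      intro h; exact absurd ((hmemSf 0).mp h).2 h0
    have hLSf : L ∉ Sf := by
      intro h; exact absurd ((hmemSf L).mp h).1.2 (lt_irrefl L)
    have hPeq : P = insert 0 (insert L Sf) := by
      rw [hPdef]
      ext p
      simp only [Finset.mem_union, Finset.mem_insert, Finset.mem_singleton]
      tauto
    have h0nmem : (0:ℝ) ∉ insert L Sf := by
      simp only [Finset.mem_insert]
      push_neg
      exact ⟨hL.ne, h0Sf⟩
    have hcard : Sf.card = m - 1 := by
      have h1 := Finset.card_insert_of_notMem h0nmem
      have h2 := Finset.card_insert_of_notMem hLSf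
      rw [← hPeq, hm, h2] at h1
      omega
    rw [hncard, hcard]
    simp only [nsmul_eq_mul]
    push_cast [Nat.cast_sub hm1]
    ring

end
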